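/- There exists a countable integral ultrametric space CU such that every separable metric space X of asymptotic dimension 0 coarsely embeds into CU. -/

import Mathlib

/-- The distance of a metric space is an ultrametric. -/
def IsUltra (X : Type*) [MetricSpace X] : Prop :=
  ∀ x y z : X, dist x z ≤ max (dist x y) (dist y z)

/-- All distances of the metric space are non-negative integers. -/
def IsIntegralDist (X : Type*) [MetricSpace X] : Prop :=
  ∀ x y : X, ∃ n : ℕ, dist x y = n

/-- A metric space has asymptotic dimension `0` if for every `r > 0` the `r`-components of
the space (classes of the chain relation generated by `dist a b < r`) are uniformly
bounded. -/
def AsdimZero (X : Type*) [MetricSpace X] : Prop :=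
  ∀ r : ℝ, r > 0 → ∃ B : ℝ, B > 0 ∧ ∀ x y : X,
    Relation.ReflTransGen (fun a b : X => dist a b < r) x y → dist x y ≤ B

/-- `f` is a coarse embedding: uniformly bornologous and uniformly proper. -/
def CoarseEmbedding {X Y : Type*} [MetricSpace X] [MetricSpace Y] (f : X → Y) : Prop :=
  (∀ R : ℝ, R > 0 → ∃ S' : ℝ, S' > 0 ∧ ∀ x y : X, dist x y ≤ R → dist (f x) (f y) ≤ S') ∧
  (∀ R : ℝ, R > 0 → ∃ S' : ℝ, S' > 0 ∧ ∀ x y : X, dist (f x) (f y) ≤ R → dist x y ≤ S')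

noncomputable section

namespace CUaux

/-- The combinatorial distance on finitely supported sequences: one plus the largest
index where the two sequences differ (zero if they are equal). -/
def dN (s t : ℕ →₀ ℕ) : ℕ :=
  (s.support ∪ t.support).sup (fun n => if s n = t n then 0 else n + 1)

lemma mem_union_of_ne {s t : ℕ →₀ ℕ} {n : ℕ} (h : s n ≠ t n) :
    n ∈ s.support ∪ t.support := by
  rcases eq_or_ne (s n) 0 with hs | hs
  · exact Finset.mem_union_right _ (Finsupp.mem_support_iff.2 (fun ht => h (by rw [hs, ht])))
  · exact Finset.mem_union_left _ (Finsupp.mem_support_iff.2 hs)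

lemma le_dN {s t : ℕ →₀ ℕ} {n : ℕ} (h : s n ≠ t n) : n + 1 ≤ dN s t := by
  have h2 := Finset.le_sup (f := fun n => if s n = t n then 0 else n + 1) (mem_union_of_ne h)
  have h3 : (if s n = t n then 0 else n + 1) ≤ dN s t := h2
  rwa [if_neg h] at h3

lemma dN_self (s : ℕ →₀ ℕ) : dN s s = 0 := by
  refine Nat.le_zero.mp (Finset.sup_le fun n _ => ?_)
  simp

lemma dN_comm (s t : ℕ →₀ ℕ) : dN s t = dN t s := by
  unfold dN
  rw [Finset.union_comm]
  refine Finset.sup_congr rfl fun n _ => ?_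
  by_cases h : s n = t n
  · rw [if_pos h, if_pos h.symm]
  · rw [if_neg h, if_neg (fun hts => h hts.symm)]

lemma eq_of_dN_eq_zero {s t : ℕ →₀ ℕ} (h : dN s t = 0) : s = t := by
  ext n
  by_contra hn
  have := le_dN hn
  omega

lemma dN_ultra (s t u : ℕ →₀ ℕ) : dN s u ≤ max (dN s t) (dN t u) := by
  refine Finset.sup_le fun n _ => ?_
  by_cases h : s n = u n
  · simp [h]
  · rw [if_neg h]
    rcases eq_or_ne (s n) (t n) with h1 | h1
    · have h2 : t n ≠ u n := fun h2 => h (h1.trans h2)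
      exact le_max_of_le_right (le_dN h2)
    · exact le_max_of_le_left (le_dN h1)

instance : MetricSpace (ℕ →₀ ℕ) where
  dist s t := (dN s t : ℝ)
  dist_self s := by
    show (dN s s : ℝ) = 0
    rw [dN_self]; norm_num
  dist_comm s t := by
    show (dN s t : ℝ) = (dN t s : ℝ)
    rw [dN_comm s t]
  dist_triangle s t u := by
    show (dN s u : ℝ) ≤ (dN s t : ℝ) + (dN t u : ℝ)
    have h := dN_ultra s t u
    have : dN s u ≤ dN s t + dN t u := h.trans (max_le (Nat.le_add_right _ _) (Nat.le_add_left _ _))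
    exact_mod_cast this
  eq_of_dist_eq_zero := by
    intro s t h
    have h2 : (dN s t : ℝ) = 0 := h
    exact eq_of_dN_eq_zero (Nat.cast_eq_zero.mp h2)

lemma dist_eq (s t : ℕ →₀ ℕ) : dist s t = (dN s t : ℝ) := rfl

/-- Every separable metric space of asymptotic dimension zero coarsely embeds
into `ℕ →₀ ℕ` with the above ultrametric. -/
theorem embed_aux {X : Type u} [MetricSpace X] (hsep : TopologicalSpace.SeparableSpace X)
    (h0 : AsdimZero X) : ∃ f : X → (ℕ →₀ ℕ), CoarseEmbedding f := by
  classical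
  by_cases hne : Nonempty X
  · obtain ⟨x₀⟩ := hne
    -- chain relation at scale m
    set rel : ℕ → X → X → Prop :=
      fun m => Relation.ReflTransGen (fun a b : X => dist a b < (m : ℝ)) with hrel
    have hsymm : ∀ m, Symmetric (rel m) :=
      fun m a b h => (@Relation.ReflTransGen.stdSymm X (fun a b : X => dist a b < (m : ℝ))
        ⟨fun a b h => by rwa [dist_comm]⟩).symm a b h
    have hequiv : ∀ m, Equivalence (rel m) := fun m =>
      ⟨fun _ => Relation.ReflTransGen.refl, fun h => hsymm m h,
        fun h1 h2 => Relation.ReflTransGen.trans h1 h2⟩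
    -- setoid at scale n+1
    set sd : ℕ → Setoid X := fun n => ⟨rel (n + 1), hequiv (n + 1)⟩ with hsd
    have hstep : ∀ (n : ℕ) (x y : X), dist x y < (n : ℝ) + 1 → rel (n + 1) x y := by
      intro n x y h
      exact Relation.ReflTransGen.single (by exact_mod_cast h)
    -- each quotient is countable
    obtain ⟨D, hDc, hDd⟩ := TopologicalSpace.exists_countable_dense X
    have hcount : ∀ n : ℕ, Countable (Quotient (sd n)) := by
      intro n
      have : Countable D := hDc.to_subtype
      refine Function.Surjective.countable
        (f := fun d : D => (Quotient.mk (sd n) (d : X))) ?_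
      intro q
      obtain ⟨x, rfl⟩ := Quotient.exists_rep q
      obtain ⟨d, hd, hdist⟩ := hDd.exists_dist_lt x (ε := (n : ℝ) + 1) (by positivity)
      exact ⟨⟨d, hd⟩, Quotient.sound (hsymm _ (hstep n x d hdist))⟩
    have hex : ∀ n : ℕ, ∃ e : Quotient (sd n) → ℕ, Function.Injective e := by
      intro n
      have := hcount n
      exact Countable.exists_injective_nat _
    choose e he using hex
    -- code, sending the class of the base point to 0
    set c : ∀ n : ℕ, Quotient (sd n) → ℕ :=
      fun n q => if q = Quotient.mk (sd n) x₀ then 0 else e n q + 1 with hc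
    have hcinj : ∀ n, Function.Injective (c n) := by
      intro n q₁ q₂ h
      rw [hc] at h
      simp only at h
      by_cases h1 : q₁ = Quotient.mk (sd n) x₀ <;>
        by_cases h2 : q₂ = Quotient.mk (sd n) x₀
      · rw [h1, h2]
      · rw [if_pos h1, if_neg h2] at h
        exact absurd h (by omega)
      · rw [if_neg h1, if_pos h2] at h
        exact absurd h (by omega)
      · rw [if_neg h1, if_neg h2] at h
        exact he n (by omega)
    have hczero : ∀ n (x : X), rel (n + 1) x x₀ → c n (Quotient.mk (sd n) x) = 0 := by
      intro n x hx
      have hq : Quotient.mk (sd n) x = Quotient.mk (sd n) x₀ := Quotient.sound hx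
      simp only [hc]
      rw [if_pos hq]
    -- the embedding
    have hfin : ∀ x : X, (Function.support fun n => c n (Quotient.mk (sd n) x)).Finite := by
      intro x
      refine Set.Finite.subset (Set.finite_Iio (Nat.ceil (dist x x₀))) ?_
      intro n hn
      simp only [Set.mem_Iio]
      by_contra hlt
      push_neg at hlt
      have : dist x x₀ < (n : ℝ) + 1 := by
        have h2 : dist x x₀ ≤ (n : ℝ) := Nat.ceil_le.mp hlt
        linarith
      exact hn (hczero n x (hstep n x x₀ this))
    set f : X → (ℕ →₀ ℕ) :=
      fun x => Finsupp.ofSupportFinite _ (hfin x) with hf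
    have hfapp : ∀ (x : X) (n : ℕ), f x n = c n (Quotient.mk (sd n) x) := by
      intro x n
      simp [hf, Finsupp.ofSupportFinite_coe]
    refine ⟨f, ?_, ?_⟩
    · -- uniformly bornologous
      intro R hR
      refine ⟨R, hR, fun x y hxy => ?_⟩
      rw [dist_eq]
      have hb : dN (f x) (f y) ≤ Nat.floor R := by
        refine Finset.sup_le fun n _ => ?_
        by_cases h : f x n = f y n
        · simp [h]
        · rw [if_neg h]
          have hcl : Quotient.mk (sd n) x ≠ Quotient.mk (sd n) y := by
            intro hcl
            exact h (by rw [hfapp, hfapp, hcl])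
          have hnr : ¬ rel (n + 1) x y := fun hr => hcl (Quotient.sound hr)
          have hd : (n : ℝ) + 1 ≤ dist x y := by
            by_contra hlt
            push_neg at hlt
            exact hnr (hstep n x y hlt)
          have : (n : ℝ) + 1 ≤ R := hd.trans hxy
          exact Nat.le_floor (by exact_mod_cast this)
      calc (dN (f x) (f y) : ℝ) ≤ (Nat.floor R : ℝ) := by exact_mod_cast hb
        _ ≤ R := Nat.floor_le hR.le
    · -- uniformly proper
      intro R hR
      obtain ⟨B, hB, hBd⟩ := h0 ((Nat.floor R : ℝ) + 1) (by positivity)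
      refine ⟨B, hB, fun x y hxy => ?_⟩
      set n := Nat.floor R with hn
      have hcl : Quotient.mk (sd n) x = Quotient.mk (sd n) y := by
        by_contra hcl
        have h : f x n ≠ f y n := by
          rw [hfapp, hfapp]
          exact fun h => hcl (hcinj n h)
        have h1 : (n : ℕ) + 1 ≤ dN (f x) (f y) := le_dN h
        have h2 : ((n : ℕ) + 1 : ℝ) ≤ dist (f x) (f y) := by
          rw [dist_eq]; exact_mod_cast h1
        have h3 : R < (n : ℝ) + 1 := Nat.lt_floor_add_one R
        linarith [h2.trans hxy]
      have hr : rel (n + 1) x y := Quotient.exact hcl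
      have := hBd x y (by
        have : ((n : ℕ) + 1 : ℝ) = (Nat.floor R : ℝ) + 1 := by push_cast [hn]; ring
        rw [hrel] at hr
        convert hr using 3
        push_cast
        ring)
      exact this
  · exact ⟨fun x => (hne ⟨x⟩).elim,
      fun R hR => ⟨1, one_pos, fun x _ _ => (hne ⟨x⟩).elim⟩,
      fun R hR => ⟨1, one_pos, fun x _ _ => (hne ⟨x⟩).elim⟩⟩

end CUaux

/-- Theorem 5.1: there is a countable integral ultrametric space `CU` such that every
separable metric space of asymptotic dimension `0` coarsely embeds into `CU`. -/
theorem exists_universal_separable_asdim_zero :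
    ∃ (CU : Type) (_ : MetricSpace CU), Countable CU ∧ IsUltra CU ∧ IsIntegralDist CU ∧
      ∀ (X : Type u) (_ : MetricSpace X), TopologicalSpace.SeparableSpace X →
        AsdimZero X → ∃ f : X → CU, CoarseEmbedding f := by
  refine ⟨ℕ →₀ ℕ, inferInstance, inferInstance, ?_, ?_, ?_⟩
  · intro s t u
    simp only [CUaux.dist_eq]
    have := CUaux.dN_ultra s t u
    rw [← Nat.cast_max]
    exact_mod_cast this
  · intro s t
    exact ⟨CUaux.dN s t, rfl⟩
  · intro X _ hsep h0
    exact CUaux.embed_aux hsep h0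

end
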